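/- Suppose R_adv is L_adv-smooth and R_real is L_real-smooth, and let θ₁, θ₂ ∈ F satisfy ∇R₁(θ₁) = 0 and ∇R₂(θ₂) = 0. Set L₁ = β·L_adv + (1−β)·L_real and L₂ = (1−β)·L_adv + β·L_real. Then for every λ ∈ [0,1], ‖∇R_μ(θ(λ))‖ ≤ max(|c₁|·L₁, |c₂|·L₂) · ‖θ₂ − θ₁‖. -/

import Mathlib

open scoped RealInnerProductSpace

open InnerProductSpace in
lemma gradient_comb {F : Type*} [NormedAddCommGroup F] [InnerProductSpace ℝ F] [CompleteSpace F]
    (f g : F → ℝ) (a b : ℝ) (x : F)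
    (hf : DifferentiableAt ℝ f x) (hg : DifferentiableAt ℝ g x) :
    gradient (fun θ => a * f θ + b * g θ) x = a • gradient f x + b • gradient g x := by
  have hF : HasFDerivAt (fun θ => a * f θ + b * g θ)
      (toDual ℝ F (a • gradient f x + b • gradient g x)) x := by
    have h1 := (hf.hasGradientAt.hasFDerivAt.const_mul a).add
      (hg.hasGradientAt.hasFDerivAt.const_mul b)
    rw [map_add, map_smul, map_smul]
    exact h1
  rw [hF.hasGradientAt.gradient, LinearIsometryEquiv.symm_apply_apply]

/-- If `R_adv` is `L_adv`-smooth and `R_real` is `L_real`-smooth, and `θ₁, θ₂` satisfy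
`∇R₁(θ₁) = 0` and `∇R₂(θ₂) = 0`, then with `L₁ = β·L_adv + (1−β)·L_real` and
`L₂ = (1−β)·L_adv + β·L_real`, for every `λ ∈ [0,1]`,
`‖∇R_μ(θ(λ))‖ ≤ max(|c₁|·L₁, |c₂|·L₂) · ‖θ₂ − θ₁‖`. -/
theorem user_gradient_bound_at_interpolation
    {F : Type*} [NormedAddCommGroup F] [InnerProductSpace ℝ F] [CompleteSpace F]
    (R_adv R_real : F → ℝ)
    (hadv : Differentiable ℝ R_adv) (hreal : Differentiable ℝ R_real)
    (β μ : ℝ) (hβ : β ∈ Set.Ioc (1 / 2 : ℝ) 1) (hμ : μ ∈ Set.Icc (0 : ℝ) 1)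
    (L_adv L_real : ℝ)
    (hL_adv : ∀ a b : F, ‖gradient R_adv a - gradient R_adv b‖ ≤ L_adv * ‖a - b‖)
    (hL_real : ∀ a b : F, ‖gradient R_real a - gradient R_real b‖ ≤ L_real * ‖a - b‖)
    (R₁ R₂ Rμ : F → ℝ)
    (hR₁ : R₁ = fun θ => β * R_adv θ + (1 - β) * R_real θ)
    (hR₂ : R₂ = fun θ => (1 - β) * R_adv θ + β * R_real θ)
    (hRμ : Rμ = fun θ => μ * R_adv θ + (1 - μ) * R_real θ)
    (c₁ c₂ L₁ L₂ : ℝ)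
    (hc₁ : c₁ = (μ + β - 1) / (2 * β - 1)) (hc₂ : c₂ = (β - μ) / (2 * β - 1))
    (hL₁ : L₁ = β * L_adv + (1 - β) * L_real) (hL₂ : L₂ = (1 - β) * L_adv + β * L_real)
    (θ₁ θ₂ : F) (h₁ : gradient R₁ θ₁ = 0) (h₂ : gradient R₂ θ₂ = 0)
    (l : ℝ) (hl : l ∈ Set.Icc (0 : ℝ) 1) :
    ‖gradient Rμ ((1 - l) • θ₂ + l • θ₁)‖ ≤ max (|c₁| * L₁) (|c₂| * L₂) * ‖θ₂ - θ₁‖ := by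
  obtain ⟨hβ1, hβ2⟩ := hβ
  obtain ⟨hμ0, hμ1⟩ := hμ
  obtain ⟨hl0, hl1⟩ := hl
  have hden : 2 * β - 1 > 0 := by linarith
  set x := (1 - l) • θ₂ + l • θ₁ with hx
  -- gradients of combos
  have g1 : ∀ y, gradient R₁ y = β • gradient R_adv y + (1 - β) • gradient R_real y := by
    intro y; rw [hR₁]; exact gradient_comb _ _ _ _ y (hadv y) (hreal y)
  have g2 : ∀ y, gradient R₂ y = (1 - β) • gradient R_adv y + β • gradient R_real y := by
    intro y; rw [hR₂]; exact gradient_comb _ _ _ _ y (hadv y) (hreal y)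
  have gμ : ∀ y, gradient Rμ y = μ • gradient R_adv y + (1 - μ) • gradient R_real y := by
    intro y; rw [hRμ]; exact gradient_comb _ _ _ _ y (hadv y) (hreal y)
  -- Rμ = c₁ R₁ + c₂ R₂ at the gradient level
  have hcomb : gradient Rμ x = c₁ • gradient R₁ x + c₂ • gradient R₂ x := by
    rw [gμ, g1, g2]
    have e1 : c₁ * β + c₂ * (1 - β) = μ := by
      rw [hc₁, hc₂, div_mul_eq_mul_div, div_mul_eq_mul_div, ← add_div,
        div_eq_iff hden.ne']; ring
    have e2 : c₁ * (1 - β) + c₂ * β = 1 - μ := by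
      rw [hc₁, hc₂, div_mul_eq_mul_div, div_mul_eq_mul_div, ← add_div,
        div_eq_iff hden.ne']; ring
    rw [← e2, ← e1]
    module
  -- Lipschitz bounds for gradient R₁ and R₂
  have hβ0 : (0:ℝ) ≤ β := by linarith
  have h1b : ‖gradient R₁ x‖ ≤ L₁ * ((1 - l) * ‖θ₂ - θ₁‖) := by
    have : gradient R₁ x = gradient R₁ x - gradient R₁ θ₁ := by rw [h₁]; abel
    rw [this, g1 x, g1 θ₁]
    have hxθ : x - θ₁ = (1 - l) • (θ₂ - θ₁) := by
      rw [hx]; module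
    have key : β • gradient R_adv x + (1 - β) • gradient R_real x -
        (β • gradient R_adv θ₁ + (1 - β) • gradient R_real θ₁)
        = β • (gradient R_adv x - gradient R_adv θ₁)
          + (1 - β) • (gradient R_real x - gradient R_real θ₁) := by module
    rw [key]
    calc ‖_‖ ≤ ‖β • (gradient R_adv x - gradient R_adv θ₁)‖
          + ‖(1 - β) • (gradient R_real x - gradient R_real θ₁)‖ := norm_add_le _ _
      _ = β * ‖gradient R_adv x - gradient R_adv θ₁‖
          + (1 - β) * ‖gradient R_real x - gradient R_real θ₁‖ := by
            rw [norm_smul, norm_smul, Real.norm_eq_abs, Real.norm_eq_abs,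
              abs_of_nonneg hβ0, abs_of_nonneg (by linarith : (0:ℝ) ≤ 1 - β)]
      _ ≤ β * (L_adv * ‖x - θ₁‖) + (1 - β) * (L_real * ‖x - θ₁‖) :=
            add_le_add (mul_le_mul_of_nonneg_left (hL_adv x θ₁) hβ0)
              (mul_le_mul_of_nonneg_left (hL_real x θ₁) (by linarith))
      _ = L₁ * ‖x - θ₁‖ := by rw [hL₁]; ring
      _ = L₁ * ((1 - l) * ‖θ₂ - θ₁‖) := by
            rw [hxθ, norm_smul, Real.norm_eq_abs, abs_of_nonneg (by linarith : (0:ℝ) ≤ 1 - l)]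
  have h2b : ‖gradient R₂ x‖ ≤ L₂ * (l * ‖θ₂ - θ₁‖) := by
    have : gradient R₂ x = gradient R₂ x - gradient R₂ θ₂ := by rw [h₂]; abel
    rw [this, g2 x, g2 θ₂]
    have hxθ : x - θ₂ = (-l) • (θ₂ - θ₁) := by rw [hx]; module
    have key : (1 - β) • gradient R_adv x + β • gradient R_real x -
        ((1 - β) • gradient R_adv θ₂ + β • gradient R_real θ₂)
        = (1 - β) • (gradient R_adv x - gradient R_adv θ₂)
          + β • (gradient R_real x - gradient R_real θ₂) := by module
    rw [key]
    calc ‖_‖ ≤ ‖(1 - β) • (gradient R_adv x - gradient R_adv θ₂)‖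
          + ‖β • (gradient R_real x - gradient R_real θ₂)‖ := norm_add_le _ _
      _ = (1 - β) * ‖gradient R_adv x - gradient R_adv θ₂‖
          + β * ‖gradient R_real x - gradient R_real θ₂‖ := by
            rw [norm_smul, norm_smul, Real.norm_eq_abs, Real.norm_eq_abs,
              abs_of_nonneg hβ0, abs_of_nonneg (by linarith : (0:ℝ) ≤ 1 - β)]
      _ ≤ (1 - β) * (L_adv * ‖x - θ₂‖) + β * (L_real * ‖x - θ₂‖) :=
            add_le_add (mul_le_mul_of_nonneg_left (hL_adv x θ₂) (by linarith))
              (mul_le_mul_of_nonneg_left (hL_real x θ₂) hβ0)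
      _ = L₂ * ‖x - θ₂‖ := by rw [hL₂]; ring
      _ = L₂ * (l * ‖θ₂ - θ₁‖) := by
            rw [hxθ, norm_smul, Real.norm_eq_abs, abs_neg, abs_of_nonneg hl0]
  -- combine
  have hM1 : |c₁| * L₁ ≤ max (|c₁| * L₁) (|c₂| * L₂) := le_max_left _ _
  have hM2 : |c₂| * L₂ ≤ max (|c₁| * L₁) (|c₂| * L₂) := le_max_right _ _
  calc ‖gradient Rμ x‖ = ‖c₁ • gradient R₁ x + c₂ • gradient R₂ x‖ := by rw [hcomb]
    _ ≤ ‖c₁ • gradient R₁ x‖ + ‖c₂ • gradient R₂ x‖ := norm_add_le _ _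
    _ = |c₁| * ‖gradient R₁ x‖ + |c₂| * ‖gradient R₂ x‖ := by
        rw [norm_smul, norm_smul, Real.norm_eq_abs, Real.norm_eq_abs]
    _ ≤ |c₁| * (L₁ * ((1 - l) * ‖θ₂ - θ₁‖)) + |c₂| * (L₂ * (l * ‖θ₂ - θ₁‖)) :=
        add_le_add (mul_le_mul_of_nonneg_left h1b (abs_nonneg c₁))
          (mul_le_mul_of_nonneg_left h2b (abs_nonneg c₂))
    _ = (|c₁| * L₁) * ((1 - l) * ‖θ₂ - θ₁‖) + (|c₂| * L₂) * (l * ‖θ₂ - θ₁‖) := by ring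
    _ ≤ max (|c₁| * L₁) (|c₂| * L₂) * ((1 - l) * ‖θ₂ - θ₁‖)
        + max (|c₁| * L₁) (|c₂| * L₂) * (l * ‖θ₂ - θ₁‖) :=
        add_le_add
          (mul_le_mul_of_nonneg_right hM1 (mul_nonneg (by linarith) (norm_nonneg _)))
          (mul_le_mul_of_nonneg_right hM2 (mul_nonneg hl0 (norm_nonneg _)))
    _ = max (|c₁| * L₁) (|c₂| * L₂) * ‖θ₂ - θ₁‖ := by ring
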